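/- Let γ₀ > 0 and γ₂ ∈ ℝ. If a two-sided sequence (y_n)_{n∈ℤ} with y_{−n} = conj(y_n) satisfies γ₂ y_{n+2} + (γ₀ + |n|) y_n + γ₂ y_{n−2} = 0 for all even n ∈ ℤ, |γ₂| ≤ γ₀/2, and y_n → 0 as |n| → ∞, then y_n = 0 for all even n. -/

import Mathlib

theorem stmt_13 (γ₀ γ₂ : ℝ) (h0 : 0 < γ₀) (h2 : |γ₂| ≤ γ₀ / 2)
    (y : ℤ → ℂ) (hconj : ∀ n : ℤ, y (-n) = starRingEnd ℂ (y n))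
    (heq : ∀ n : ℤ, Even n →
      (γ₂ : ℂ) * y (n + 2) + ((γ₀ : ℂ) + (|n| : ℤ)) * y n + (γ₂ : ℂ) * y (n - 2) = 0)
    (hdecay : Filter.Tendsto y Filter.cofinite (nhds 0)) :
    ∀ n : ℤ, Even n → y n = 0 := by
  by_contra hc
  push_neg at hc
  obtain ⟨m, hm, hym⟩ := hc
  -- key norm inequality from the recurrence
  have key : ∀ n : ℤ, Even n →
      (γ₀ + ((|n| : ℤ) : ℝ)) * ‖y n‖ ≤ |γ₂| * (‖y (n+2)‖ + ‖y (n-2)‖) := by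
    intro n hn
    have h := heq n hn
    have h' : ((γ₀ : ℂ) + ((|n| : ℤ) : ℂ)) * y n
        = -((γ₂:ℂ) * y (n+2) + (γ₂:ℂ) * y (n-2)) := by linear_combination h
    have hnorm : ‖((γ₀ : ℂ) + ((|n| : ℤ) : ℂ)) * y n‖
        = (γ₀ + ((|n| : ℤ) : ℝ)) * ‖y n‖ := by
      rw [norm_mul]
      congr 1
      have h1 : ((γ₀ : ℂ) + ((|n| : ℤ) : ℂ)) = ((γ₀ + ((|n| : ℤ) : ℝ) : ℝ) : ℂ) := by
        rw [Complex.ofReal_add, Complex.ofReal_intCast]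
      have h2' : (0:ℝ) ≤ ((|n| : ℤ) : ℝ) := Int.cast_nonneg_iff.mpr (abs_nonneg n)
      rw [h1, Complex.norm_real]
      exact abs_of_nonneg (by linarith)
    calc (γ₀ + ((|n| : ℤ) : ℝ)) * ‖y n‖
        = ‖-((γ₂:ℂ) * y (n+2) + (γ₂:ℂ) * y (n-2))‖ := by rw [← h', hnorm]
      _ ≤ ‖(γ₂:ℂ) * y (n+2)‖ + ‖(γ₂:ℂ) * y (n-2)‖ := by
          rw [norm_neg]; exact norm_add_le _ _
      _ = |γ₂| * (‖y (n+2)‖ + ‖y (n-2)‖) := by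
          rw [norm_mul, norm_mul, Complex.norm_real, Real.norm_eq_abs]; ring
  -- existence of an even maximizer
  have hε : 0 < ‖y m‖ := norm_pos_iff.mpr hym
  have hfin : {n : ℤ | ¬ ‖y n‖ < ‖y m‖}.Finite := by
    have := Filter.eventually_cofinite.mp
      (hdecay.eventually (eventually_nhds_norm_smul_sub_lt (1:ℂ) (0:ℂ) hε))
    refine this.subset ?_
    intro n hn
    simp only [Set.mem_setOf_eq] at hn ⊢
    intro h
    simp only [one_smul, sub_zero] at h
    exact hn h
  classical
  set T : Finset ℤ := hfin.toFinset.filter (fun n => Even n) with hT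
  have hmT : m ∈ T := by
    simp [hT, Set.Finite.mem_toFinset, hm]
  obtain ⟨n₀, hn₀T, hn₀max⟩ := T.exists_max_image (fun n => ‖y n‖) ⟨m, hmT⟩
  have hn₀even : Even n₀ := by
    simp only [hT, Finset.mem_filter] at hn₀T; exact hn₀T.2
  set M := ‖y n₀‖ with hM
  have hmax : ∀ k : ℤ, Even k → ‖y k‖ ≤ M := by
    intro k hk
    by_cases hkT : k ∈ T
    · exact hn₀max k hkT
    · have : ‖y k‖ < ‖y m‖ := by
        by_contra hnk
        push_neg at hnk
        refine hkT ?_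
        simp only [hT, Finset.mem_filter, Set.Finite.mem_toFinset, Set.mem_setOf_eq]
        exact ⟨by push_neg; exact hnk, hk⟩
      exact le_trans this.le (hn₀max m hmT)
  have hMpos : 0 < M := lt_of_lt_of_le hε (hn₀max m hmT)
  -- a maximizer at index n must have n = 0
  have hzero : ∀ n : ℤ, Even n → ‖y n‖ = M → n = 0 := by
    intro n hn hMn
    have h1 := key n hn
    have h2 : |γ₂| * (‖y (n+2)‖ + ‖y (n-2)‖) ≤ γ₀ * M := by
      have ha := hmax (n+2) (hn.add even_two)
      have hb := hmax (n-2) (hn.sub even_two)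
      calc |γ₂| * (‖y (n+2)‖ + ‖y (n-2)‖) ≤ (γ₀/2) * (M + M) := by
            apply mul_le_mul h2 (add_le_add ha hb) (by positivity) (by positivity)
        _ = γ₀ * M := by ring
    rw [hMn] at h1
    have h3 : ((|n| : ℤ) : ℝ) * M ≤ 0 := by nlinarith
    have h4 : ((|n| : ℤ) : ℝ) ≤ 0 := by
      by_contra h5
      push_neg at h5
      nlinarith
    have : |n| ≤ 0 := by exact_mod_cast h4
    simpa using le_antisymm this (abs_nonneg n)
  have hn₀0 : n₀ = 0 := hzero n₀ hn₀even rfl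
  -- ‖y 2‖ < M, since 2 is not a maximizer
  have h2lt : ‖y 2‖ < M := by
    rcases lt_or_eq_of_le (hmax 2 even_two) with h | h
    · exact h
    · exact absurd (hzero 2 even_two h) (by norm_num)
  have hm2 : ‖y (-2 : ℤ)‖ = ‖y 2‖ := by
    rw [show ((-2 : ℤ)) = -(2:ℤ) by ring, hconj]
    exact RCLike.norm_conj _
  -- final contradiction at n = 0
  have h0key := key 0 (Even.zero)
  rw [hn₀0] at hM
  have : γ₀ * M ≤ |γ₂| * (‖y (0+2)‖ + ‖y (0-2)‖) := by
    have : ((|(0:ℤ)| : ℤ) : ℝ) = 0 := by norm_num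
    rw [this] at h0key
    simpa [hM] using h0key
  have hfin2 : |γ₂| * (‖y (0+2)‖ + ‖y (0-2)‖) < γ₀ * M := by
    have : (0:ℤ) + 2 = 2 := by ring
    rw [this]
    have : (0:ℤ) - 2 = -2 := by ring
    rw [this, hm2]
    calc |γ₂| * (‖y 2‖ + ‖y 2‖) ≤ (γ₀/2) * (‖y 2‖ + ‖y 2‖) := by
          apply mul_le_mul_of_nonneg_right h2 (by positivity)
      _ = γ₀ * ‖y 2‖ := by ring
      _ < γ₀ * M := by exact mul_lt_mul_of_pos_left h2lt h0
  linarith
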